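/- There is no pair (λ, ν) ∈ [0,∞)⁶ × [0,∞)⁶ with λ_j = λ_{j+3} for all j ∈ {0,1,2} satisfying the system: for every j ∈ {0,…,5} (indices taken modulo 6), −(2/3)·λ_j·log(λ_j) + (7/9)·λ_j − (2/9)·(λ_{j+1} + λ_{j+2} + λ_{j+4} + λ_{j+5}) + (1/9)·λ_{j+3} − ν_j = 0; 0 < ∑_{k=0}^{5} λ_k² < 6; and λ_j·ν_j = 0 for every j ∈ {0,…,5}. -/

import Mathlib

open scoped BigOperators

lemma kkt_aux_strictAnti :
    StrictAntiOn (fun x : ℝ => x * Real.log x - 2*x) (Set.Ioo 0 2) := by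
  apply strictAntiOn_of_deriv_neg (convex_Ioo 0 2)
  · apply ContinuousOn.sub
    · exact continuousOn_id.mul (Real.continuousOn_log.mono
        (by intro x hx; simpa using ne_of_gt hx.1))
    · exact (continuous_const.mul continuous_id).continuousOn
  · intro x hx
    rw [interior_Ioo] at hx
    have hd : HasDerivAt (fun x : ℝ => x * Real.log x - 2*x) (Real.log x + 1 - 2*1) x :=
      (Real.hasDerivAt_mul_log (ne_of_gt hx.1)).sub ((hasDerivAt_id x).const_mul 2)
    rw [hd.deriv]
    have hx2 : x < Real.exp 1 := by have := Real.exp_one_gt_d9; linarith [hx.2]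
    have : Real.log x < 1 := by
      calc Real.log x < Real.log (Real.exp 1) := Real.log_lt_log hx.1 hx2
        _ = 1 := Real.log_exp 1
    linarith

set_option maxHeartbeats 1000000 in
/-- the KKT system for the LSI on `ℤ_6` with weight `φ_6 = (0,1,2,1,2,1)`
has no solution in the region where all opposite pairs are equal
(`λ_j = λ_{j+3}` for `j ∈ {0,1,2}`; indices modulo 6).
(Note `Real.log 0 = 0`, so the convention `x log x = 0` at `x = 0` holds.) -/
theorem kkt_Z6_opposite_equal :
    ¬ ∃ (l ν : ZMod 6 → ℝ),
      (∀ j, 0 ≤ l j) ∧ (∀ j, 0 ≤ ν j) ∧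
      (l 0 = l 3 ∧ l 1 = l 4 ∧ l 2 = l 5) ∧
      (∀ j : ZMod 6,
        -(2/3 : ℝ) * l j * Real.log (l j) + (7/9 : ℝ) * l j
          - (2/9 : ℝ) * (l (j+1) + l (j+2) + l (j+4) + l (j+5))
          + (1/9 : ℝ) * l (j+3) - ν j = 0) ∧
      (0 < ∑ k : ZMod 6, l k ^ 2) ∧ ((∑ k : ZMod 6, l k ^ 2) < 6) ∧
      (∀ j, l j * ν j = 0) := by
  rintro ⟨l, ν, hl, hν, ⟨h03, h14, h25⟩, heq, hpos, hlt, hcomp⟩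
  have e0 := heq 0
  have e1 := heq 1
  have e2 := heq 2
  simp only [show (0:ZMod 6)+1 = 1 from by decide, show (0:ZMod 6)+2 = 2 from by decide,
    show (0:ZMod 6)+3 = 3 from by decide, show (0:ZMod 6)+4 = 4 from by decide,
    show (0:ZMod 6)+5 = 5 from by decide, show (1:ZMod 6)+1 = 2 from by decide,
    show (1:ZMod 6)+2 = 3 from by decide, show (1:ZMod 6)+3 = 4 from by decide,
    show (1:ZMod 6)+4 = 5 from by decide, show (1:ZMod 6)+5 = 0 from by decide,
    show (2:ZMod 6)+1 = 3 from by decide, show (2:ZMod 6)+2 = 4 from by decide,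
    show (2:ZMod 6)+3 = 5 from by decide, show (2:ZMod 6)+4 = 0 from by decide,
    show (2:ZMod 6)+5 = 1 from by decide] at e0 e1 e2
  rw [← h03, ← h14, ← h25] at e0 e1 e2
  have hsum : ∑ k : ZMod 6, l k ^ 2
      = l 0^2 + l 1^2 + l 2^2 + l 3^2 + l 4^2 + l 5^2 := by
    show ∑ k : Fin 6, _ = _
    rw [Fin.sum_univ_six]; rfl
  have hsum2 : ∑ k : ZMod 6, l k ^ 2 = 2*(l 0^2 + l 1^2 + l 2^2) := by
    rw [hsum, ← h03, ← h14, ← h25]; ring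
  rw [hsum2] at hpos hlt
  -- none of l 0, l 1, l 2 can vanish
  have ha : l 0 ≠ 0 := by
    intro h
    simp only [h, Real.log_zero] at e0
    have hb : l 1 = 0 := by linarith [hν 0, hl 1, hl 2]
    have hc : l 2 = 0 := by linarith [hν 0, hl 1, hl 2]
    rw [h, hb, hc] at hpos; norm_num at hpos
  have hb : l 1 ≠ 0 := by
    intro h
    simp only [h, Real.log_zero] at e1
    have ha' : l 0 = 0 := by linarith [hν 1, hl 0, hl 2]
    exact ha ha'
  have hc : l 2 ≠ 0 := by
    intro h
    simp only [h, Real.log_zero] at e2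
    have ha' : l 0 = 0 := by linarith [hν 2, hl 0, hl 1]
    exact ha ha'
  have ha' : 0 < l 0 := lt_of_le_of_ne (hl 0) (Ne.symm ha)
  have hb' : 0 < l 1 := lt_of_le_of_ne (hl 1) (Ne.symm hb)
  have hc' : 0 < l 2 := lt_of_le_of_ne (hl 2) (Ne.symm hc)
  have n0 : ν 0 = 0 := by rcases mul_eq_zero.mp (hcomp 0) with h|h; exact absurd h ha; exact h
  have n1 : ν 1 = 0 := by rcases mul_eq_zero.mp (hcomp 1) with h|h; exact absurd h hb; exact h
  have n2 : ν 2 = 0 := by rcases mul_eq_zero.mp (hcomp 2) with h|h; exact absurd h hc; exact h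
  rw [n0] at e0; rw [n1] at e1; rw [n2] at e2
  have k0 : l 0 * Real.log (l 0) - 2 * l 0 = -(2/3)*(l 0 + l 1 + l 2) := by linarith
  have k1 : l 1 * Real.log (l 1) - 2 * l 1 = -(2/3)*(l 0 + l 1 + l 2) := by linarith
  have k2 : l 2 * Real.log (l 2) - 2 * l 2 = -(2/3)*(l 0 + l 1 + l 2) := by linarith
  have m0 : l 0 ∈ Set.Ioo (0:ℝ) 2 := ⟨ha', by nlinarith⟩
  have m1 : l 1 ∈ Set.Ioo (0:ℝ) 2 := ⟨hb', by nlinarith⟩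
  have m2 : l 2 ∈ Set.Ioo (0:ℝ) 2 := ⟨hc', by nlinarith⟩
  have hab : l 0 = l 1 := kkt_aux_strictAnti.injOn m0 m1 (by
    show l 0 * Real.log (l 0) - 2 * l 0 = l 1 * Real.log (l 1) - 2 * l 1
    rw [k0, k1])
  have hac : l 0 = l 2 := kkt_aux_strictAnti.injOn m0 m2 (by
    show l 0 * Real.log (l 0) - 2 * l 0 = l 2 * Real.log (l 2) - 2 * l 2
    rw [k0, k2])
  have hlog : l 0 * Real.log (l 0) = 0 := by
    rw [← hab, ← hac] at k0; linarith
  have : Real.log (l 0) = 0 := by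
    rcases mul_eq_zero.mp hlog with h|h
    · exact absurd h ha
    · exact h
  rcases Real.log_eq_zero.mp this with h|h|h
  · exact ha h
  · rw [h, ← hab, ← hac, h] at hlt; norm_num at hlt
  · linarith
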